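/- Let 1 ≤ k ≤ n and let 𝓕 be a k-Sperner family of subsets of [n] that contains a set of size i with i < n/2. Then, as real numbers, |𝓕| ≤ Σ(n,k) − C(n, ⌊(n−k)/2⌋) / C(n, i) + 1. -/
import Mathlib

open Finset

-- monotonicity of binomials up to the middle
lemma choose_mono_half {n a b : ℕ} (hab : a ≤ b) (hb : 2 * b ≤ n) :
    n.choose a ≤ n.choose b := by
  induction b with
  | zero => simp [Nat.le_zero.1 hab]
  | succ b ih =>
    rcases Nat.eq_or_lt_of_le hab with h | h
    · exact h ▸ le_rfl
    · exact (ih (by omega) (by omega)).trans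
        (Nat.choose_le_succ_of_lt_half_left (by omega))

lemma choose_middle_le {n m j : ℕ} (h1 : m ≤ j) (h2 : j ≤ n - m) (h3 : 2 * m ≤ n) :
    n.choose m ≤ n.choose j := by
  by_cases hj : 2 * j ≤ n
  · exact choose_mono_half h1 hj
  · have hjn : j ≤ n := by omega
    calc n.choose m ≤ n.choose (n - j) := choose_mono_half (by omega) (by omega)
    _ = n.choose j := Nat.choose_symm hjn

lemma antichain_sum_le_one {n : ℕ} {𝒜 : Finset (Finset (Fin n))}
    (h : IsAntichain (· ⊆ ·) (𝒜 : Set (Finset (Fin n)))) :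
    ∑ F ∈ 𝒜, (1 : ℝ) / (n.choose F.card) ≤ 1 := by
  have hmaps : ∀ F ∈ 𝒜, F.card ∈ Finset.range (n + 1) := fun F _ =>
    mem_range.2 (Nat.lt_succ_of_le (by simpa using F.card_le_univ))
  rw [← Finset.sum_fiberwise_of_maps_to hmaps]
  have hLYM := Finset.sum_card_slice_div_choose_le_one (𝕜 := ℝ) h
  simp only [Fintype.card_fin] at hLYM
  refine le_trans (le_of_eq (Finset.sum_congr rfl fun r hr => ?_)) hLYM
  have : ∀ F ∈ 𝒜.filter (fun F => F.card = r), (1 : ℝ) / (n.choose F.card)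
      = 1 / (n.choose r) := fun F hF => by rw [(mem_filter.1 hF).2]
  rw [Finset.sum_congr rfl this, Finset.sum_const]
  simp only [Finset.slice, nsmul_eq_mul]
  ring

/-- Height of `F` in the family `𝓕`: one plus the longest strict chain in `𝓕` below `F`. -/
def famht {n : ℕ} (𝓕 : Finset (Finset (Fin n))) (F : Finset (Fin n)) : ℕ :=
  ((𝓕.filter (· ⊂ F)).attach.sup fun G => famht 𝓕 G.1) + 1
termination_by F.card
decreasing_by exact Finset.card_lt_card (Finset.mem_filter.1 G.2).2

lemma famht_pos {n : ℕ} (𝓕 : Finset (Finset (Fin n))) (F : Finset (Fin n)) :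
    1 ≤ famht 𝓕 F := by rw [famht]; omega

lemma famht_lt {n : ℕ} {𝓕 : Finset (Finset (Fin n))} {G F : Finset (Fin n)}
    (hG : G ∈ 𝓕) (hGF : G ⊂ F) : famht 𝓕 G < famht 𝓕 F := by
  conv_rhs => rw [famht]
  have hmem : G ∈ 𝓕.filter (· ⊂ F) := Finset.mem_filter.2 ⟨hG, hGF⟩
  have : famht 𝓕 G ≤ (𝓕.filter (· ⊂ F)).attach.sup fun G => famht 𝓕 G.1 :=
    Finset.le_sup (f := fun G => famht 𝓕 G.1) (Finset.mem_attach _ ⟨G, hmem⟩)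
  omega

lemma famht_chain {n : ℕ} (𝓕 : Finset (Finset (Fin n))) :
    ∀ (N : ℕ) (F : Finset (Fin n)), F.card < N → F ∈ 𝓕 →
    ∃ g : Fin (famht 𝓕 F) → Finset (Fin n),
      (∀ j, g j ∈ 𝓕) ∧ (∀ j l, j < l → g j ⊂ g l) ∧ (∀ j, g j ⊆ F) := by
  intro N
  induction N with
  | zero => exact fun F hF => absurd hF (by omega)
  | succ N ih =>
    intro F hFN hF𝓕
    by_cases hne : (𝓕.filter (· ⊂ F)).Nonempty
    · obtain ⟨G', hG', hsup⟩ := Finset.exists_mem_eq_sup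
        (𝓕.filter (· ⊂ F)).attach (hne.attach) (fun G => famht 𝓕 G.1)
      obtain ⟨hG𝓕, hGF⟩ := Finset.mem_filter.1 G'.2
      have hcard : G'.1.card < N := by
        have := Finset.card_lt_card hGF; omega
      obtain ⟨g', hg1, hg2, hg3⟩ := ih G'.1 hcard hG𝓕
      have hht : famht 𝓕 F = famht 𝓕 G'.1 + 1 := by rw [famht, hsup]
      refine ⟨fun j => if h : (j : ℕ) < famht 𝓕 G'.1 then g' ⟨j, h⟩ else F, ?_, ?_, ?_⟩
      · intro j; dsimp only; split <;> [exact hg1 _; exact hF𝓕]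
      · intro j l hjl
        have hjl' : (j : ℕ) < (l : ℕ) := hjl
        have hj := j.2; have hl := l.2
        dsimp only
        split <;> split
        · exact hg2 _ _ hjl'
        · exact lt_of_le_of_lt (hg3 _) hGF
        · omega
        · omega
      · intro j; dsimp only; split
        · exact (hg3 _).trans hGF.subset
        · exact subset_rfl
    · have hsup0 : ((𝓕.filter (· ⊂ F)).attach.sup fun G => famht 𝓕 G.1) = 0 := by
        rw [Finset.not_nonempty_iff_eq_empty.1 hne]; rfl
      have hht : famht 𝓕 F = 1 := by rw [famht, hsup0]
      refine ⟨fun _ => F, fun _ => hF𝓕, ?_, fun _ => subset_rfl⟩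
      intro j l hjl
      have hjl' : (j : ℕ) < (l : ℕ) := hjl
      have hj := j.2; have hl := l.2
      omega

lemma famht_le {n k : ℕ} {𝓕 : Finset (Finset (Fin n))}
    (hSperner : ¬∃ g : Fin (k + 1) → Finset (Fin n), (∀ j, g j ∈ 𝓕) ∧
      Function.Injective g ∧ ∀ j l, g j ⊆ g l ∨ g l ⊆ g j)
    {F : Finset (Fin n)} (hF : F ∈ 𝓕) : famht 𝓕 F ≤ k := by
  by_contra hgt
  obtain ⟨g, hg1, hg2, hg3⟩ := famht_chain 𝓕 (F.card + 1) F (Nat.lt_succ_self _) hF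
  have hle : k + 1 ≤ famht 𝓕 F := by omega
  refine hSperner ⟨g ∘ Fin.castLE hle, fun j => hg1 _, ?_, ?_⟩
  · intro j l hjl
    by_contra hne
    rcases lt_trichotomy j l with h | h | h
    · exact (hg2 _ _ h).ne hjl
    · exact hne h
    · exact (hg2 _ _ h).ne hjl.symm
  · intro j l
    rcases lt_trichotomy j l with h | h | h
    · exact Or.inl (hg2 _ _ h).subset
    · exact Or.inl (by rw [h])
    · exact Or.inr (hg2 _ _ h).subset

lemma mirsky_sum {n k : ℕ} {𝓕 : Finset (Finset (Fin n))}
    (hSperner : ¬∃ g : Fin (k + 1) → Finset (Fin n), (∀ j, g j ∈ 𝓕) ∧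
      Function.Injective g ∧ ∀ j l, g j ⊆ g l ∨ g l ⊆ g j) :
    ∑ F ∈ 𝓕, (1 : ℝ) / (n.choose F.card) ≤ k := by
  have hmaps : ∀ F ∈ 𝓕, famht 𝓕 F ∈ Finset.Icc 1 k := fun F hF =>
    Finset.mem_Icc.2 ⟨famht_pos 𝓕 F, famht_le hSperner hF⟩
  rw [← Finset.sum_fiberwise_of_maps_to hmaps]
  calc ∑ t ∈ Finset.Icc 1 k, ∑ F ∈ 𝓕.filter (fun F => famht 𝓕 F = t),
        (1 : ℝ) / (n.choose F.card)
      ≤ ∑ t ∈ Finset.Icc 1 k, 1 := by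
        refine Finset.sum_le_sum fun t _ => antichain_sum_le_one ?_
        intro F hF G hG hne hsub
        simp only [Finset.coe_filter, Set.mem_setOf_eq] at hF hG
        have : F ⊂ G := ssubset_of_subset_of_ne hsub hne
        have := famht_lt hF.1 this
        omega
    _ = k := by simp

/-- `Σ(n,k) = ∑_{i=1}^k C(n, ⌊(n-k)/2⌋ + i)`, the sum of the `k` largest binomial
coefficients of order `n`. -/
def SigmaL (n k : ℕ) : ℕ := ∑ i ∈ Finset.Icc 1 k, n.choose ((n - k) / 2 + i)

lemma sigmaL_eq (n k : ℕ) :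
    (SigmaL n k : ℝ) = ∑ r ∈ Finset.Icc ((n - k) / 2 + 1) ((n - k) / 2 + k),
      (n.choose r : ℝ) := by
  rw [← Finset.map_add_left_Icc, Finset.sum_map, SigmaL]
  push_cast
  rfl

lemma lp_bound (n k i : ℕ) (hk1 : 1 ≤ k) (hkn : k ≤ n) (h2i : 2 * i + 1 ≤ n)
    (f : ℕ → ℝ) (hf0 : ∀ r, 0 ≤ f r)
    (hf1 : ∀ r ∈ Finset.range (n + 1), f r ≤ (n.choose r : ℝ))
    (hsum : ∑ r ∈ Finset.range (n + 1), f r / (n.choose r) ≤ (k : ℝ))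
    (hfi : 1 ≤ f i) :
    ∑ r ∈ Finset.range (n + 1), f r
      ≤ (SigmaL n k : ℝ) - (n.choose ((n - k) / 2) : ℝ) / (n.choose i) + 1 := by
  set m := (n - k) / 2 with hm
  set T := Finset.range (n + 1) with hT
  set L := Finset.Icc (m + 1) (m + k) with hL
  have hmn : 2 * m ≤ n - k := by omega
  have hLT : L ⊆ T := by
    intro r hr
    rw [hL, Finset.mem_Icc] at hr
    rw [hT, Finset.mem_range]; omega
  have hcpos : ∀ r ∈ T, (0 : ℝ) < (n.choose r : ℝ) := by
    intro r hr
    rw [hT, Finset.mem_range] at hr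
    exact_mod_cast Nat.choose_pos (by omega)
  have hiT : i ∈ T := by rw [hT, Finset.mem_range]; omega
  have hcmL : ∀ r ∈ L, (n.choose m : ℝ) ≤ (n.choose r : ℝ) := by
    intro r hr
    rw [hL, Finset.mem_Icc] at hr
    exact_mod_cast choose_middle_le (by omega) (by omega) (by omega)
  have hcmT : ∀ r ∈ T, r ∉ L → (n.choose r : ℝ) ≤ (n.choose m : ℝ) := by
    intro r hrT hrL
    rw [hT, Finset.mem_range] at hrT
    rw [hL, Finset.mem_Icc] at hrL
    by_cases hrm : r ≤ m
    · exact_mod_cast choose_mono_half hrm (by omega)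
    · have hr' : m + k + 1 ≤ r := by omega
      have : n.choose r = n.choose (n - r) := (Nat.choose_symm (by omega)).symm
      rw [this]
      exact_mod_cast choose_mono_half (by omega) (by omega)
  -- decomposition
  have hsplit : ∀ r ∈ T, f r = f r * (1 - (n.choose m : ℝ) / (n.choose r))
      + (n.choose m : ℝ) * (f r / (n.choose r)) := by
    intro r _; ring
  rw [Finset.sum_congr rfl hsplit, Finset.sum_add_distrib, ← Finset.mul_sum]
  have hsum2 : (n.choose m : ℝ) * ∑ r ∈ T, f r / (n.choose r)
      ≤ (n.choose m : ℝ) * k :=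
    mul_le_mul_of_nonneg_left hsum (by positivity)
  have hTsplit : ∑ r ∈ T \ L, (fun r => f r * (1 - (n.choose m : ℝ) / (n.choose r))) r
      + ∑ r ∈ L, (fun r => f r * (1 - (n.choose m : ℝ) / (n.choose r))) r
      = ∑ r ∈ T, f r * (1 - (n.choose m : ℝ) / (n.choose r)) :=
    Finset.sum_sdiff hLT
  have hLbound : ∑ r ∈ L, f r * (1 - (n.choose m : ℝ) / (n.choose r))
      ≤ (SigmaL n k : ℝ) - k * (n.choose m : ℝ) := by
    have h1 : ∑ r ∈ L, f r * (1 - (n.choose m : ℝ) / (n.choose r))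
        ≤ ∑ r ∈ L, ((n.choose r : ℝ) - (n.choose m : ℝ)) := by
      refine Finset.sum_le_sum fun r hr => ?_
      have hpos := hcpos r (hLT hr)
      have hfrac : (n.choose m : ℝ) / (n.choose r) ≤ 1 :=
        (div_le_one hpos).2 (hcmL r hr)
      calc f r * (1 - (n.choose m : ℝ) / (n.choose r))
          ≤ (n.choose r : ℝ) * (1 - (n.choose m : ℝ) / (n.choose r)) :=
            mul_le_mul_of_nonneg_right (hf1 r (hLT hr)) (by linarith)
        _ = (n.choose r : ℝ) - (n.choose m : ℝ) := by field_simp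
    have h2 : ∑ r ∈ L, ((n.choose r : ℝ) - (n.choose m : ℝ))
        = (SigmaL n k : ℝ) - k * (n.choose m : ℝ) := by
      rw [Finset.sum_sub_distrib, Finset.sum_const, sigmaL_eq, hL, Nat.card_Icc]
      have : m + k + 1 - (m + 1) = k := by omega
      rw [this, nsmul_eq_mul]
    linarith
  have hcmi : ∀ r ∈ T, f r * (1 - (n.choose m : ℝ) / (n.choose r)) ≤ 0 → True := fun _ _ _ => trivial
  have hRest : ∑ r ∈ T \ L, f r * (1 - (n.choose m : ℝ) / (n.choose r))
      ≤ 1 - (n.choose m : ℝ) / (n.choose i) := by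
    have hterm : ∀ r ∈ T \ L, f r * (1 - (n.choose m : ℝ) / (n.choose r)) ≤ 0 := by
      intro r hr
      obtain ⟨hrT, hrL⟩ := Finset.mem_sdiff.1 hr
      have hpos := hcpos r hrT
      have : (1 : ℝ) ≤ (n.choose m : ℝ) / (n.choose r) :=
        (one_le_div hpos).2 (hcmT r hrT hrL)
      exact mul_nonpos_iff.2 (Or.inl ⟨hf0 r, by linarith⟩)
    by_cases hiL : i ∈ L
    · have h0 : (n.choose m : ℝ) / (n.choose i) ≤ 1 :=
        (div_le_one (hcpos i hiT)).2 (hcmL i hiL)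
      exact (Finset.sum_nonpos hterm).trans (by linarith)
    · have hiTL : i ∈ T \ L := Finset.mem_sdiff.2 ⟨hiT, hiL⟩
      rw [← Finset.sum_erase_add _ _ hiTL]
      have h1 : ∑ r ∈ (T \ L).erase i, f r * (1 - (n.choose m : ℝ) / (n.choose r)) ≤ 0 :=
        Finset.sum_nonpos fun r hr => hterm r (Finset.mem_of_mem_erase hr)
      have hfac : (1 - (n.choose m : ℝ) / (n.choose i)) ≤ 0 := by
        have : (1 : ℝ) ≤ (n.choose m : ℝ) / (n.choose i) :=
          (one_le_div (hcpos i hiT)).2 (hcmT i hiT hiL)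
        linarith
      have h2 : f i * (1 - (n.choose m : ℝ) / (n.choose i))
          ≤ 1 - (n.choose m : ℝ) / (n.choose i) := by
        calc f i * (1 - (n.choose m : ℝ) / (n.choose i))
            ≤ 1 * (1 - (n.choose m : ℝ) / (n.choose i)) :=
              mul_le_mul_of_nonpos_right hfi hfac
          _ = _ := one_mul _
      linarith
  push_cast at hsum2 ⊢
  linarith [hTsplit]

/-- Let `1 ≤ k ≤ n` and let `𝓕` be a `k`-Sperner family of subsets of `[n]`
(no `k+1` distinct pairwise comparable members) containing a set of size `i` with `i < n/2`.
Then `|𝓕| ≤ Σ(n,k) - C(n, ⌊(n-k)/2⌋)/C(n,i) + 1` as real numbers. -/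
theorem statement19 (n k i : ℕ) (hk1 : 1 ≤ k) (hkn : k ≤ n)
    (𝓕 : Finset (Finset (Fin n)))
    (hSperner : ¬∃ g : Fin (k + 1) → Finset (Fin n), (∀ j, g j ∈ 𝓕) ∧
      Function.Injective g ∧ ∀ j l, g j ⊆ g l ∨ g l ⊆ g j)
    (hi : ∃ F ∈ 𝓕, F.card = i) (hin : (i : ℝ) < n / 2) :
    (𝓕.card : ℝ) ≤ (SigmaL n k : ℝ) - (n.choose ((n - k) / 2) : ℝ) / (n.choose i) + 1 := by
  have h2i : 2 * i + 1 ≤ n := by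
    have : (2 * i : ℝ) < n := by linarith
    exact_mod_cast this
  have hmaps : ∀ F ∈ 𝓕, F.card ∈ Finset.range (n + 1) := fun F _ =>
    Finset.mem_range.2 (Nat.lt_succ_of_le (by simpa using F.card_le_univ))
  set f : ℕ → ℝ := fun r => ((𝓕.filter (fun F => F.card = r)).card : ℝ) with hf
  have hcard : (𝓕.card : ℝ) = ∑ r ∈ Finset.range (n + 1), f r := by
    rw [Finset.card_eq_sum_card_fiberwise hmaps]
    push_cast
    rfl
  have hf0 : ∀ r, 0 ≤ f r := fun r => by positivity
  have hf1 : ∀ r ∈ Finset.range (n + 1), f r ≤ (n.choose r : ℝ) := by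
    intro r _
    have hsub : 𝓕.filter (fun F => F.card = r) ⊆ Finset.univ.powersetCard r := by
      intro F hF
      exact Finset.mem_powersetCard.2 ⟨Finset.subset_univ F, (Finset.mem_filter.1 hF).2⟩
    have := Finset.card_le_card hsub
    rw [Finset.card_powersetCard] at this
    simp only [Finset.card_fin] at this
    show ((𝓕.filter (fun F => F.card = r)).card : ℝ) ≤ (n.choose r : ℝ)
    exact_mod_cast this
  have hsum : ∑ r ∈ Finset.range (n + 1), f r / (n.choose r) ≤ (k : ℝ) := by
    have h := mirsky_sum (n := n) (k := k) (𝓕 := 𝓕) hSperner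
    rw [← Finset.sum_fiberwise_of_maps_to hmaps] at h
    refine le_trans (le_of_eq ?_) h
    refine Finset.sum_congr rfl fun r hr => ?_
    have : ∀ F ∈ 𝓕.filter (fun F => F.card = r), (1 : ℝ) / (n.choose F.card)
        = 1 / (n.choose r) := fun F hF => by rw [(Finset.mem_filter.1 hF).2]
    rw [Finset.sum_congr rfl this, Finset.sum_const, nsmul_eq_mul, hf]
    ring
  have hfi : 1 ≤ f i := by
    obtain ⟨F₀, hF₀, hc⟩ := hi
    have : F₀ ∈ 𝓕.filter (fun F => F.card = i) := Finset.mem_filter.2 ⟨hF₀, hc⟩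
    have := Finset.card_pos.2 ⟨F₀, this⟩
    show (1:ℝ) ≤ ((𝓕.filter (fun F => F.card = i)).card : ℝ)
    exact_mod_cast this
  rw [hcard]
  exact lp_bound n k i hk1 hkn h2i f hf0 hf1 hsum hfi
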